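/- Let N ≥ 1, let 𝒞 ⊆ {0,1}^N be a finite nonempty set, and let μ be a probability distribution on 𝒞 with max_{c∈𝒞} μ(c) ≤ 5/6. Let A ≥ 1 be such that for every matrix Γ ∈ ℝ^{𝒞×𝒞} with nonnegative entries and zeros on the diagonal, ‖Γ‖ ≤ A · max_{i∈[N]} ‖Γ ∘ D_i‖. Then there exists an index i ∈ [N] such that the binary entropy of p_i := μ({c : c_i = 1}) satisfies H(p_i) ≥ (1/(36A²))·log₂(36A²). -/

import Mathlib

/-- The ℓ₂→ℓ₂ operator norm (largest singular value) of a real matrix. -/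
noncomputable def l2OpNorm {α β : Type*} [Fintype α] [Fintype β] [DecidableEq β]
    (M : Matrix α β ℝ) : ℝ :=
  ‖LinearMap.toContinuousLinearMap (Matrix.toEuclideanLin M)‖

/-- The 0/1 matrix `D_i` whose `(c,c')` entry is 1 iff `c_i ≠ c'_i`. -/
def Dmat {N : ℕ} (𝒞 : Finset (Fin N → Bool)) (i : Fin N) :
    Matrix {c // c ∈ 𝒞} {c // c ∈ 𝒞} ℝ :=
  Matrix.of fun c c' => if (c : Fin N → Bool) i = (c' : Fin N → Bool) i then 0 else 1

/-- The binary entropy `H(p) = −p·log₂ p − (1−p)·log₂(1−p)` (with `H(0) = H(1) = 0`,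
which holds automatically since `Real.logb 2 0 = 0`). -/
noncomputable def binEnt (p : ℝ) : ℝ :=
  -p * Real.logb 2 p - (1 - p) * Real.logb 2 (1 - p)

lemma aux_opNorm_le {α : Type*} [Fintype α] [DecidableEq α]
    (M : Matrix α α ℝ) (C : ℝ) (hC : 0 ≤ C)
    (h : ∀ x : α → ℝ, ∑ c, (M.mulVec x c) ^ 2 ≤ C ^ 2 * ∑ c, (x c) ^ 2) :
    l2OpNorm M ≤ C := by
  refine ContinuousLinearMap.opNorm_le_bound _ hC fun x => ?_
  have hx : ∀ c, (LinearMap.toContinuousLinearMap (Matrix.toEuclideanLin M) x) c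
      = M.mulVec (fun c => x c) c := by
    intro c
    simp [Matrix.toEuclideanLin_apply]
  rw [EuclideanSpace.norm_eq, EuclideanSpace.norm_eq]
  have h2 : ∑ c, ‖(LinearMap.toContinuousLinearMap (Matrix.toEuclideanLin M) x) c‖ ^ 2
      ≤ C ^ 2 * ∑ c, ‖x c‖ ^ 2 := by
    simp only [hx, Real.norm_eq_abs, sq_abs]
    exact h _
  calc Real.sqrt (∑ c, ‖(LinearMap.toContinuousLinearMap (Matrix.toEuclideanLin M) x) c‖ ^ 2)
      ≤ Real.sqrt (C ^ 2 * ∑ c, ‖x c‖ ^ 2) := Real.sqrt_le_sqrt h2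
    _ = C * Real.sqrt (∑ c, ‖x c‖ ^ 2) := by
        rw [Real.sqrt_mul (sq_nonneg C), Real.sqrt_sq hC]

lemma aux_le_opNorm {α : Type*} [Fintype α] [DecidableEq α]
    (M : Matrix α α ℝ) (v : α → ℝ) (hv : ∑ c, (v c) ^ 2 = 1) (r : ℝ)
    (hr : r ≤ ∑ c, v c * M.mulVec v c) : r ≤ l2OpNorm M := by
  set T := LinearMap.toContinuousLinearMap (Matrix.toEuclideanLin M)
  set w : EuclideanSpace ℝ α := (WithLp.equiv 2 (α → ℝ)).symm v with hw
  have hwn : ‖w‖ = 1 := by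
    rw [EuclideanSpace.norm_eq]
    simp only [hw, WithLp.equiv_symm_apply, PiLp.toLp_apply, Real.norm_eq_abs, sq_abs, hv, Real.sqrt_one]
  have hTw : ∀ c, T w c = M.mulVec v c := by
    intro c
    simp [T, Matrix.toEuclideanLin_apply]
    rfl
  have hinner : (inner ℝ w (T w) : ℝ) = ∑ c, v c * M.mulVec v c := by
    rw [PiLp.inner_apply]
    refine Finset.sum_congr rfl fun c _ => ?_
    rw [hTw c]
    simp [hw, RCLike.inner_apply, mul_comm]
  calc r ≤ (inner ℝ w (T w) : ℝ) := by rw [hinner]; exact hr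
    _ ≤ ‖w‖ * ‖T w‖ := real_inner_le_norm _ _
    _ ≤ ‖w‖ * (‖T‖ * ‖w‖) := by
        gcongr
        exact T.le_opNorm w
    _ = ‖T‖ := by rw [hwn]; ring


lemma negmullog_mono {a b : ℝ} (ha : 0 < a) (hab : a ≤ b) (hb : b ≤ Real.exp (-1)) :
    -(a * Real.log a) ≤ -(b * Real.log b) := by
  have hb0 : 0 < b := lt_of_lt_of_le ha hab
  set c : ℝ := b / a with hc
  have hc1 : 1 ≤ c := (one_le_div ha).mpr hab
  have hbac : b = a * c := by rw [hc, mul_div_assoc', mul_div_cancel_left₀ _ (ne_of_gt ha)]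
  have hlb : Real.log b = Real.log a + Real.log c := by
    rw [hbac, Real.log_mul (ne_of_gt ha) (by positivity)]
  have hlc0 : 0 ≤ Real.log c := Real.log_nonneg hc1
  have hlcc : Real.log c ≤ c - 1 := Real.log_le_sub_one_of_pos (by positivity)
  have hlbneg : Real.log b ≤ -1 := by
    calc Real.log b ≤ Real.log (Real.exp (-1)) := Real.log_le_log hb0 hb
      _ = -1 := Real.log_exp _
  have hla : Real.log a ≤ -1 - Real.log c := by
    have := hlb ▸ hlbneg; linarith [hlb, hlbneg]
  nlinarith [mul_nonneg (sub_nonneg.mpr hc1) hlc0, ha.le,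
    mul_le_mul_of_nonneg_left hla (le_of_lt ha),
    mul_nonneg (mul_nonneg ha.le (sub_nonneg.mpr hc1)) (sub_nonneg.mpr hlcc)]

lemma entropy_log_aux {t p : ℝ} (ht : 0 < t) (ht36 : t ≤ 1 / 36)
    (hp0 : 0 ≤ p) (hp1 : p ≤ 1) (htp : t ≤ p * (1 - p)) :
    t * Real.log (1 / t) ≤ -(p * Real.log p) - (1 - p) * Real.log (1 - p) := by
  -- reduce to the case p ≤ 1/2 via symmetry
  have key : ∀ q : ℝ, 0 ≤ q → q ≤ 1 / 2 → t ≤ q →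
      t * Real.log (1 / t) ≤ -(q * Real.log q) := by
    intro q hq0 hq2 htq
    have hq0' : 0 < q := lt_of_lt_of_le ht htq
    rw [Real.log_div one_ne_zero (ne_of_gt ht), Real.log_one]
    have hE : (1 : ℝ) / 36 ≤ Real.exp (-1) := by
      rw [Real.exp_neg]
      have h36 : Real.exp 1 ≤ 36 := by
        have := Real.exp_one_lt_d9; linarith
      have := inv_anti₀ (Real.exp_pos 1) h36
      simpa using this
    by_cases hqe : q ≤ Real.exp (-1)
    · have := negmullog_mono ht htq hqe
      linarith
    · push_neg at hqe
      have h1 : -(t * Real.log t) ≤ -((1/36 : ℝ) * Real.log (1/36)) :=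
        negmullog_mono ht ht36 hE
      have h36 : Real.log (1 / 36 : ℝ) = -Real.log 36 := by
        rw [Real.log_div one_ne_zero (by norm_num), Real.log_one]; ring
      have hlog36 : Real.log 36 ≤ 4 := by
        have h4 : (36 : ℝ) ≤ Real.exp 4 := by
          have h := Real.exp_one_gt_d9
          have : Real.exp 1 ^ (4:ℕ) = Real.exp 4 := by
            rw [← Real.exp_nat_mul]; norm_num
          have h2 : (2.7182818283:ℝ)^(4:ℕ) ≤ Real.exp 1 ^ (4:ℕ) :=
            pow_le_pow_left₀ (by norm_num) h.le 4
          have h3 : (36:ℝ) ≤ (2.7182818283:ℝ)^(4:ℕ) := by norm_num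
          linarith
        calc Real.log 36 ≤ Real.log (Real.exp 4) := Real.log_le_log (by norm_num) h4
          _ = 4 := Real.log_exp _
      have hlq : Real.log q ≤ -Real.log 2 := by
        calc Real.log q ≤ Real.log (1/2) := Real.log_le_log hq0' hq2
          _ = -Real.log 2 := by rw [one_div, Real.log_inv]
      have hql : Real.exp (-1) * Real.log 2 ≤ q * (-Real.log q) := by
        have h2 : 0 ≤ Real.log 2 := Real.log_nonneg (by norm_num)
        have := mul_le_mul hqe.le (by linarith : Real.log 2 ≤ -Real.log q) h2 hq0
        linarith
      have hnum : (4 : ℝ) / 36 ≤ Real.exp (-1) * Real.log 2 := by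
        rw [Real.exp_neg]
        have he : Real.exp 1 < 2.7182818286 := Real.exp_one_lt_d9
        have hl : 0.6931471803 < Real.log 2 := Real.log_two_gt_d9
        have hi : (2.7182818286 : ℝ)⁻¹ < (Real.exp 1)⁻¹ :=
          inv_strictAnti₀ (Real.exp_pos 1) he
        calc (4:ℝ)/36 ≤ (2.7182818286 : ℝ)⁻¹ * 0.6931471803 := by norm_num
          _ ≤ (Real.exp 1)⁻¹ * Real.log 2 :=
            mul_le_mul hi.le hl.le (by norm_num) (by positivity)
      nlinarith
  by_cases hp2 : p ≤ 1 / 2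
  · have h2 : 0 ≤ -((1 - p) * Real.log (1 - p)) := by
      have : Real.log (1 - p) ≤ 0 := Real.log_nonpos (by linarith) (by linarith)
      nlinarith
    have := key p hp0 hp2 (by nlinarith)
    linarith
  · push_neg at hp2
    have h2 : 0 ≤ -(p * Real.log p) := by
      have : Real.log p ≤ 0 := Real.log_nonpos hp0 hp1
      nlinarith
    have := key (1 - p) (by linarith) (by linarith) (by nlinarith)
    linarith

/-- **Entropic balanced-query lemma.** Let `𝒞 ⊆ {0,1}^N` be finite and nonempty, `μ` a
probability distribution on `𝒞` with `max_c μ(c) ≤ 5/6`, and `A ≥ 1` such that every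
nonnegative matrix `Γ` with zero diagonal satisfies `‖Γ‖ ≤ A · max_i ‖Γ ∘ D_i‖`. Then
some index `i ∈ [N]` satisfies `H(μ(C_i = 1)) ≥ (1/(36A²))·log₂(36A²)`. -/
theorem exists_high_entropy_query {N : ℕ} (hN : 1 ≤ N)
    (𝒞 : Finset (Fin N → Bool)) (h𝒞 : 𝒞.Nonempty)
    (μ : {c // c ∈ 𝒞} → ℝ) (hμ0 : ∀ c, 0 ≤ μ c) (hμ1 : ∑ c, μ c = 1)
    (hμmax : ∀ c, μ c ≤ 5 / 6)
    (A : ℝ) (hA : 1 ≤ A)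
    (hadv : ∀ Γ : Matrix {c // c ∈ 𝒞} {c // c ∈ 𝒞} ℝ,
      (∀ c c', 0 ≤ Γ c c') → (∀ c, Γ c c = 0) →
      l2OpNorm Γ ≤ A * ⨆ i : Fin N,
        l2OpNorm (Matrix.of fun c c' => Γ c c' * Dmat 𝒞 i c c')) :
    ∃ i : Fin N,
      (1 / (36 * A ^ 2)) * Real.logb 2 (36 * A ^ 2) ≤
        binEnt (∑ c : {c // c ∈ 𝒞}, if (c : Fin N → Bool) i = true then μ c else 0) := by
  classical
  have hA0 : (0:ℝ) < A := lt_of_lt_of_le one_pos hA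
  set s : {c // c ∈ 𝒞} → ℝ := fun c => Real.sqrt (μ c) with hs
  have hs2 : ∀ c, s c ^ 2 = μ c := fun c => Real.sq_sqrt (hμ0 c)
  set Γ : Matrix {c // c ∈ 𝒞} {c // c ∈ 𝒞} ℝ :=
    Matrix.of (fun c c' => if c = c' then 0 else s c * s c') with hΓdef
  have hΓ0 : ∀ c c', 0 ≤ Γ c c' := by
    intro c c'
    simp only [hΓdef, Matrix.of_apply]
    split
    · exact le_refl 0
    · positivity
  have hΓd : ∀ c, Γ c c = 0 := by intro c; simp [hΓdef]
  -- lower bound on the quadratic form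
  have hterm : ∀ c, s c * Γ.mulVec s c = (∑ c', μ c * μ c') - μ c * μ c := by
    intro c
    have h1 : Γ.mulVec s c = ∑ c', Γ c c' * s c' := rfl
    rw [h1, Finset.mul_sum]
    have h2 : ∀ c' : {c // c ∈ 𝒞}, s c * (Γ c c' * s c')
        = μ c * μ c' - (if c = c' then μ c * μ c' else 0) := by
      intro c'
      by_cases h : c = c'
      · simp [hΓdef, h]
      · simp only [hΓdef, Matrix.of_apply, if_neg h]
        have : s c * (s c * s c' * s c') = s c ^ 2 * s c' ^ 2 := by ring
        rw [this, hs2, hs2]; ring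
    rw [Finset.sum_congr rfl fun c' _ => h2 c', Finset.sum_sub_distrib]
    simp
  have hμsq : ∑ c, μ c * μ c ≤ 5 / 6 := by
    calc ∑ c, μ c * μ c ≤ ∑ c, (5/6) * μ c :=
          Finset.sum_le_sum fun c _ => mul_le_mul_of_nonneg_right (hμmax c) (hμ0 c)
      _ = 5/6 := by rw [← Finset.mul_sum, hμ1, mul_one]
  have hquad : (1:ℝ)/6 ≤ ∑ c, s c * Γ.mulVec s c := by
    rw [Finset.sum_congr rfl fun c _ => hterm c, Finset.sum_sub_distrib]
    have : ∑ c : {c // c ∈ 𝒞}, ∑ c', μ c * μ c' = 1 := by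
      rw [← Finset.sum_mul_sum, hμ1]; norm_num
    rw [this]
    linarith
  have hlow : (1:ℝ)/6 ≤ l2OpNorm Γ := by
    refine aux_le_opNorm Γ s ?_ _ hquad
    calc ∑ c, s c ^ 2 = ∑ c, μ c := Finset.sum_congr rfl fun c _ => hs2 c
      _ = 1 := hμ1
  -- the maximizing index
  have hNE : Nonempty (Fin N) := ⟨⟨0, hN⟩⟩
  obtain ⟨i₀, hi₀⟩ := Finite.exists_max
    (fun i : Fin N => l2OpNorm (Matrix.of fun c c' => Γ c c' * Dmat 𝒞 i c c'))
  have hsup : l2OpNorm Γ ≤ A * l2OpNorm (Matrix.of fun c c' => Γ c c' * Dmat 𝒞 i₀ c c') := by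
    refine le_trans (hadv Γ hΓ0 hΓd) ?_
    have := ciSup_le hi₀
    exact mul_le_mul_of_nonneg_left this (le_of_lt hA0)
  -- probabilities
  set Pb : Bool → ℝ := fun b => ∑ c : {c // c ∈ 𝒞}, if (c : Fin N → Bool) i₀ = b then μ c else 0 with hPb
  have hPbnn : ∀ b, 0 ≤ Pb b := by
    intro b
    refine Finset.sum_nonneg fun c _ => ?_
    split
    · exact hμ0 c
    · exact le_refl 0
  have hPbsum : Pb true + Pb false = 1 := by
    rw [hPb, ← Finset.sum_add_distrib, ← hμ1]
    refine Finset.sum_congr rfl fun c _ => ?_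
    cases h : (c : Fin N → Bool) i₀ <;> simp [h]
  -- upper bound on the hadamard product norm
  have hup : l2OpNorm (Matrix.of fun c c' => Γ c c' * Dmat 𝒞 i₀ c c')
      ≤ Real.sqrt (Pb true * Pb false) := by
    refine aux_opNorm_le _ _ (Real.sqrt_nonneg _) fun x => ?_
    rw [Real.sq_sqrt (mul_nonneg (hPbnn true) (hPbnn false))]
    set M : Matrix {c // c ∈ 𝒞} {c // c ∈ 𝒞} ℝ := Matrix.of fun c c' => Γ c c' * Dmat 𝒞 i₀ c c' with hM
    set T : Bool → ℝ := fun b => ∑ c : {c // c ∈ 𝒞}, if (c : Fin N → Bool) i₀ = b then s c * x c else 0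
      with hT
    set X : Bool → ℝ := fun b => ∑ c : {c // c ∈ 𝒞}, if (c : Fin N → Bool) i₀ = b then x c ^ 2 else 0
      with hX
    have hXnn : ∀ b, 0 ≤ X b := by
      intro b
      refine Finset.sum_nonneg fun c _ => ?_
      split
      · positivity
      · exact le_refl 0
    have hMe : ∀ c c' : {c // c ∈ 𝒞}, M c c'
        = if (c : Fin N → Bool) i₀ = (c' : Fin N → Bool) i₀ then 0 else s c * s c' := by
      intro c c'
      by_cases h : (c : Fin N → Bool) i₀ = (c' : Fin N → Bool) i₀
      · simp [hM, Dmat, h]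
      · have hcc : c ≠ c' := by
          intro e; exact h (by rw [e])
        simp [hM, Dmat, h, hΓdef, hcc]
    have hmv : ∀ c : {c // c ∈ 𝒞}, M.mulVec x c = s c * T (!(c : Fin N → Bool) i₀) := by
      intro c
      have h1 : M.mulVec x c = ∑ c', M c c' * x c' := rfl
      rw [h1, hT, Finset.mul_sum]
      refine Finset.sum_congr rfl fun c' _ => ?_
      rw [hMe]
      cases h : (c : Fin N → Bool) i₀ <;> cases h' : (c' : Fin N → Bool) i₀ <;>
        simp [h, h'] <;> ring
    have hsplit : ∑ c : {c // c ∈ 𝒞}, M.mulVec x c ^ 2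
        = Pb true * T false ^ 2 + Pb false * T true ^ 2 := by
      have h1 : ∀ c : {c // c ∈ 𝒞}, M.mulVec x c ^ 2
          = (if (c : Fin N → Bool) i₀ = true then μ c * T false ^ 2 else 0)
            + (if (c : Fin N → Bool) i₀ = false then μ c * T true ^ 2 else 0) := by
        intro c
        rw [hmv c]
        cases h : (c : Fin N → Bool) i₀ <;> simp [h, mul_pow, hs2]
      rw [Finset.sum_congr rfl fun c _ => h1 c, Finset.sum_add_distrib]
      congr 1
      · rw [hPb, Finset.sum_mul]
        refine Finset.sum_congr rfl fun c _ => ?_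
        split <;> simp
      · rw [hPb, Finset.sum_mul]
        refine Finset.sum_congr rfl fun c _ => ?_
        split <;> simp
    have hCS : ∀ b, T b ^ 2 ≤ Pb b * X b := by
      intro b
      have h1 : T b = ∑ c : {c // c ∈ 𝒞}, (if (c : Fin N → Bool) i₀ = b then s c else 0)
          * (if (c : Fin N → Bool) i₀ = b then x c else 0) := by
        rw [hT]
        refine Finset.sum_congr rfl fun c _ => ?_
        split <;> simp
      rw [h1]
      refine le_trans (Finset.sum_mul_sq_le_sq_mul_sq _ _ _) (le_of_eq ?_)
      congr 1
      · rw [hPb]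
        refine Finset.sum_congr rfl fun c _ => ?_
        split <;> simp [hs2]
      · rw [hX]
        refine Finset.sum_congr rfl fun c _ => ?_
        split <;> simp
    have hXsum : X true + X false = ∑ c, x c ^ 2 := by
      rw [hX, ← Finset.sum_add_distrib]
      refine Finset.sum_congr rfl fun c _ => ?_
      cases h : (c : Fin N → Bool) i₀ <;> simp [h]
    calc ∑ c : {c // c ∈ 𝒞}, M.mulVec x c ^ 2 = Pb true * T false ^ 2 + Pb false * T true ^ 2 := hsplit
      _ ≤ Pb true * (Pb false * X false) + Pb false * (Pb true * X true) := by
          refine add_le_add ?_ ?_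
          · exact mul_le_mul_of_nonneg_left (hCS false) (hPbnn true)
          · exact mul_le_mul_of_nonneg_left (hCS true) (hPbnn false)
      _ = Pb true * Pb false * (X true + X false) := by ring
      _ = Pb true * Pb false * ∑ c, x c ^ 2 := by rw [hXsum]
  -- conclude p(1-p) ≥ 1/(36A²)
  have hchain : (1:ℝ)/6 ≤ A * Real.sqrt (Pb true * Pb false) :=
    le_trans hlow (le_trans hsup (mul_le_mul_of_nonneg_left hup (le_of_lt hA0)))
  have hsq : 1/(6*A) ≤ Real.sqrt (Pb true * Pb false) := by
    rw [div_le_iff₀ (by positivity)]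
    nlinarith [Real.sqrt_nonneg (Pb true * Pb false)]
  have hpq : 1/(36*A^2) ≤ Pb true * Pb false := by
    have h1 : (1/(6*A))^2 ≤ Pb true * Pb false :=
      (Real.le_sqrt (by positivity) (mul_nonneg (hPbnn true) (hPbnn false))).mp hsq
    calc 1/(36*A^2) = (1/(6*A))^2 := by ring
      _ ≤ _ := h1
  -- finish with the entropy bound
  refine ⟨i₀, ?_⟩
  have harg : (∑ c : {c // c ∈ 𝒞}, if (c : Fin N → Bool) i₀ = true then μ c else 0)
      = Pb true := by rw [hPb]
  rw [harg]
  set p : ℝ := Pb true with hpdef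
  have hq : Pb false = 1 - p := by linarith
  have hp0 : 0 ≤ p := hPbnn true
  have hp1 : p ≤ 1 := by have := hPbnn false; linarith
  set t : ℝ := 1/(36*A^2) with ht
  have ht0 : 0 < t := by positivity
  have ht36 : t ≤ 1/36 := by
    rw [ht]
    rw [div_le_div_iff₀ (by positivity) (by norm_num)]
    nlinarith
  have htp : t ≤ p * (1 - p) := by rw [← hq]; exact hpq
  have hmain := entropy_log_aux ht0 ht36 hp0 hp1 htp
  have h1t : (36*A^2 : ℝ) = 1/t := by
    rw [ht]; field_simp
  have hlog2 : (0:ℝ) < Real.log 2 := Real.log_pos (by norm_num)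
  rw [h1t, binEnt, Real.logb, Real.logb, Real.logb]
  have e1 : t * (Real.log (1/t) / Real.log 2) = (t * Real.log (1/t)) / Real.log 2 := by ring
  have e2 : -p * (Real.log p / Real.log 2) - (1-p) * (Real.log (1-p) / Real.log 2)
      = (-(p * Real.log p) - (1-p) * Real.log (1-p)) / Real.log 2 := by ring
  rw [e1, e2]
  exact (div_le_div_iff_of_pos_right hlog2).mpr hmain
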